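/- Consider the OQRW on V = {1,2} with 𝔥₁ = 𝔥₂ = ℂ², fixed p ∈ (0,1), and transitions L₁₁ = L₂₂ = √p·Id, L₁₂ = L₂₁ = √(1−p)·B where B is the 2×2 matrix swapping the basis vectors. Then a state ρ on ℂ² ⊗ ℂ² is 𝔐-invariant if and only if ρ = ρ₁ ⊗ |1⟩⟨1| + Bρ₁B ⊗ |2⟩⟨2| for some positive semidefinite 2×2 matrix ρ₁ with trace 1/2. -/

import Mathlib

open Matrix Kronecker
open scoped ComplexOrder

/-- Transition operators: `L₁₁ = L₂₂ = √p·Id`, `L₁₂ = L₂₁ = √(1-p)·B` with `B`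
the swap matrix. -/
noncomputable def L18 (p : ℝ) : Fin 2 → Fin 2 → Matrix (Fin 2) (Fin 2) ℂ :=
  fun i j =>
    if i = j then (Real.sqrt p : ℂ) • (1 : Matrix (Fin 2) (Fin 2) ℂ)
    else (Real.sqrt (1 - p) : ℂ) • !![0, 1; 1, 0]

/-- The OQRW `𝔐(ρ) = ∑_{i,j} (L_{i,j} ⊗ |i⟩⟨j|) ρ (L_{i,j} ⊗ |i⟩⟨j|)*` on
`ℂ² ⊗ ℂ²` (index order: internal × site). -/
noncomputable def M18 (p : ℝ)
    (ρ : Matrix (Fin 2 × Fin 2) (Fin 2 × Fin 2) ℂ) :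
    Matrix (Fin 2 × Fin 2) (Fin 2 × Fin 2) ℂ :=
  ∑ i : Fin 2, ∑ j : Fin 2,
    (L18 p i j ⊗ₖ Matrix.single i j (1 : ℂ)) * ρ *
      (L18 p i j ⊗ₖ Matrix.single i j (1 : ℂ))ᴴ

lemma kron_conjT (A B : Matrix (Fin 2) (Fin 2) ℂ) : (A ⊗ₖ B)ᴴ = Aᴴ ⊗ₖ Bᴴ := by
  ext ⟨a,i⟩ ⟨b,j⟩
  simp [Matrix.conjTranspose_apply, Matrix.kroneckerMap_apply, mul_comm]

set_option maxHeartbeats 1000000 in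
theorem stmt18 (p : ℝ) (hp : 0 < p) (hp1 : p < 1)
    (ρ : Matrix (Fin 2 × Fin 2) (Fin 2 × Fin 2) ℂ) :
    (ρ.PosSemidef ∧ ρ.trace = 1 ∧ M18 p ρ = ρ) ↔
    (∃ ρ₁ : Matrix (Fin 2) (Fin 2) ℂ, ρ₁.PosSemidef ∧ ρ₁.trace = 1 / 2 ∧
      ρ = ρ₁ ⊗ₖ Matrix.single (0 : Fin 2) (0 : Fin 2) (1 : ℂ) +
        (!![0, 1; 1, 0] * ρ₁ * !![0, 1; 1, 0]) ⊗ₖ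
          Matrix.single (1 : Fin 2) (1 : Fin 2) (1 : ℂ)) := by
  have hs : (Real.sqrt p : ℂ) * (Real.sqrt p : ℂ) = (p : ℂ) := by
    rw [← Complex.ofReal_mul, Real.mul_self_sqrt hp.le]
  have ht : (Real.sqrt (1 - p) : ℂ) * (Real.sqrt (1 - p) : ℂ) = ((1 - p : ℝ) : ℂ) := by
    rw [← Complex.ofReal_mul, Real.mul_self_sqrt (by linarith)]
  have hs' : ∀ x : ℂ, (Real.sqrt p : ℂ) * x * (Real.sqrt p : ℂ) = (p : ℂ) * x := by
    intro x; rw [mul_right_comm, hs]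
  have ht' : ∀ x : ℂ, (Real.sqrt (1 - p) : ℂ) * x * (Real.sqrt (1 - p) : ℂ)
      = ((1 - p : ℝ) : ℂ) * x := by
    intro x; rw [mul_right_comm, ht]
  have hne : ((1 - p : ℝ) : ℂ) ≠ 0 := by
    simp only [ne_eq, Complex.ofReal_eq_zero]; linarith
  constructor
  · rintro ⟨hPSD, htr, hinv⟩
    have hE : ∀ x y, M18 p ρ x y = ρ x y := fun x y => by rw [hinv]
    have hzero1 : ∀ a b : Fin 2, ρ (a, 0) (b, 1) = 0 := by
      intro a b
      have h := hE (a, 0) (b, 1)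
      fin_cases a <;> fin_cases b <;>
      · simp [M18, L18, Matrix.mul_apply, Matrix.kroneckerMap_apply, Matrix.conjTranspose_apply,
          Fintype.sum_prod_type, Fin.sum_univ_two, Matrix.single, Matrix.smul_apply,
          Matrix.one_apply, Matrix.sum_apply, hs', ht'] at h ⊢
        first | exact h | exact h.symm
    have hzero2 : ∀ a b : Fin 2, ρ (a, 1) (b, 0) = 0 := by
      intro a b
      have h := hE (a, 1) (b, 0)
      fin_cases a <;> fin_cases b <;>
      · simp [M18, L18, Matrix.mul_apply, Matrix.kroneckerMap_apply, Matrix.conjTranspose_apply,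
          Fintype.sum_prod_type, Fin.sum_univ_two, Matrix.single, Matrix.smul_apply,
          Matrix.one_apply, Matrix.sum_apply, hs', ht'] at h ⊢
        first | exact h | exact h.symm
    have hdiag : ∀ a b : Fin 2, ρ (a, 1) (b, 1) = ρ (1 - a, 0) (1 - b, 0) := by
      intro a b
      have h := hE (a, 1) (b, 1)
      fin_cases a <;> fin_cases b <;>
      · simp [M18, L18, Matrix.mul_apply, Matrix.kroneckerMap_apply, Matrix.conjTranspose_apply,
          Fintype.sum_prod_type, Fin.sum_univ_two, Matrix.single, Matrix.smul_apply,
          Matrix.one_apply, Matrix.sum_apply, hs', ht'] at h ⊢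
        apply mul_left_cancel₀ hne
        push_cast at h ⊢
        first | linear_combination h | linear_combination -h
    have h1 : ρ (0,0) (0,1) = 0 := by simpa using hzero1 0 0
    have h2 : ρ (0,0) (1,1) = 0 := by simpa using hzero1 0 1
    have h3 : ρ (1,0) (0,1) = 0 := by simpa using hzero1 1 0
    have h4 : ρ (1,0) (1,1) = 0 := by simpa using hzero1 1 1
    have h5 : ρ (0,1) (0,0) = 0 := by simpa using hzero2 0 0
    have h6 : ρ (0,1) (1,0) = 0 := by simpa using hzero2 0 1
    have h7 : ρ (1,1) (0,0) = 0 := by simpa using hzero2 1 0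
    have h8 : ρ (1,1) (1,0) = 0 := by simpa using hzero2 1 1
    have h9 : ρ (0,1) (0,1) = ρ (1,0) (1,0) := by simpa using hdiag 0 0
    have h10 : ρ (0,1) (1,1) = ρ (1,0) (0,0) := by simpa using hdiag 0 1
    have h11 : ρ (1,1) (0,1) = ρ (0,0) (1,0) := by simpa using hdiag 1 0
    have h12 : ρ (1,1) (1,1) = ρ (0,0) (0,0) := by simpa using hdiag 1 1
    refine ⟨ρ.submatrix (fun a => (a, 0)) (fun b => (b, 0)), hPSD.submatrix _, ?_, ?_⟩
    · simp [Matrix.trace, Matrix.diag, Fintype.sum_prod_type, Fin.sum_univ_two,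
        Matrix.submatrix_apply] at htr ⊢
      linear_combination (htr - h9 - h12) / 2
    · ext ⟨a, i⟩ ⟨b, j⟩
      fin_cases a <;> fin_cases i <;> fin_cases b <;> fin_cases j <;>
        simp [Matrix.kroneckerMap_apply, Matrix.single, Matrix.mul_apply,
          Matrix.vecMul, dotProduct, Matrix.vecHead, Matrix.vecTail,
          Fin.sum_univ_two, Matrix.submatrix_apply, h1, h2, h3, h4, h5, h6, h7, h8,
          h9, h10, h11, h12]
  · rintro ⟨ρ₁, h1, h2, rfl⟩
    obtain ⟨C, hC⟩ : ∃ C : Matrix (Fin 2) (Fin 2) ℂ, ρ₁ = Cᴴ * C := by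
      open MatrixOrder in exact CStarAlgebra.nonneg_iff_eq_star_mul_self.mp h1.nonneg
    have hB : (!![0, 1; 1, 0] : Matrix (Fin 2) (Fin 2) ℂ)ᴴ = !![0, 1; 1, 0] := by
      ext i j; fin_cases i <;> fin_cases j <;> simp [Matrix.conjTranspose_apply]
    have hE00 : (Matrix.single (0 : Fin 2) (0 : Fin 2) (1 : ℂ))ᴴ
        = Matrix.single 0 0 1 := by
      ext i j; fin_cases i <;> fin_cases j <;>
        simp [Matrix.conjTranspose_apply, Matrix.single]
    have hE11 : (Matrix.single (1 : Fin 2) (1 : Fin 2) (1 : ℂ))ᴴ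
        = Matrix.single 1 1 1 := by
      ext i j; fin_cases i <;> fin_cases j <;>
        simp [Matrix.conjTranspose_apply, Matrix.single]
    have hm00 : Matrix.single (0 : Fin 2) (0 : Fin 2) (1 : ℂ) *
        Matrix.single 0 0 1 = Matrix.single 0 0 1 := by
      rw [Matrix.single_mul_single_same]; norm_num
    have hm11 : Matrix.single (1 : Fin 2) (1 : Fin 2) (1 : ℂ) *
        Matrix.single 1 1 1 = Matrix.single 1 1 1 := by
      rw [Matrix.single_mul_single_same]; norm_num
    have hBB : (!![0, 1; 1, 0] : Matrix (Fin 2) (Fin 2) ℂ) * !![0, 1; 1, 0] = 1 := by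
      ext i j; fin_cases i <;> fin_cases j <;>
        simp [Matrix.mul_apply, Fin.sum_univ_two, Matrix.one_apply]
    refine ⟨?_, ?_, ?_⟩
    · apply Matrix.PosSemidef.add
      · rw [hC]
        rw [show (Cᴴ * C) ⊗ₖ Matrix.single (0 : Fin 2) (0 : Fin 2) (1 : ℂ)
            = (C ⊗ₖ Matrix.single 0 0 1)ᴴ * (C ⊗ₖ Matrix.single 0 0 1) by
            rw [kron_conjT, ← Matrix.mul_kronecker_mul, hE00, hm00]]
        exact Matrix.posSemidef_conjTranspose_mul_self _
      · rw [hC]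
        rw [show (!![0, 1; 1, 0] * (Cᴴ * C) * !![0, 1; 1, 0]) ⊗ₖ
            Matrix.single (1 : Fin 2) (1 : Fin 2) (1 : ℂ)
            = ((C * !![0, 1; 1, 0]) ⊗ₖ Matrix.single 1 1 1)ᴴ *
              ((C * !![0, 1; 1, 0]) ⊗ₖ Matrix.single 1 1 1) by
            rw [kron_conjT, ← Matrix.mul_kronecker_mul, hE11, hm11,
              Matrix.conjTranspose_mul, hB]
            congr 1
            noncomm_ring]
        exact Matrix.posSemidef_conjTranspose_mul_self _
    · have hcyc : ((!![0, 1; 1, 0] : Matrix (Fin 2) (Fin 2) ℂ) * ρ₁ *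
          !![0, 1; 1, 0]).trace = ρ₁.trace := by
        rw [Matrix.trace_mul_cycle, hBB, Matrix.one_mul]
      simp only [Matrix.trace_add, Matrix.trace_kronecker, hcyc, h2]
      simp [Matrix.trace, Matrix.single, Fin.sum_univ_two]
      norm_num
    · have hBρB : (!![0, 1; 1, 0] : Matrix (Fin 2) (Fin 2) ℂ) * ρ₁ * !![0, 1; 1, 0]
          = !![ρ₁ 1 1, ρ₁ 1 0; ρ₁ 0 1, ρ₁ 0 0] := by
        ext i j; fin_cases i <;> fin_cases j <;>
          simp [Matrix.mul_apply, Fin.sum_univ_two, Matrix.vecMul, dotProduct,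
            Matrix.vecHead, Matrix.vecTail]
      rw [hBρB]
      ext ⟨a, i⟩ ⟨b, j⟩
      fin_cases a <;> fin_cases i <;> fin_cases b <;> fin_cases j <;>
        simp [M18, L18, Matrix.mul_apply, Matrix.kroneckerMap_apply, Matrix.conjTranspose_apply,
          Fintype.sum_prod_type, Fin.sum_univ_two, Matrix.single, Matrix.smul_apply,
          Matrix.one_apply, Matrix.sum_apply, Matrix.add_apply, hs', ht'] <;>
        (push_cast; ring)
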